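/- For a finite connected simple graph G, two distinct vertices x and y, and α ∈ [0,1), define h(α) = κ_α(x,y)/(1−α). Then h is monotonically increasing in α on [0,1) and bounded above by 2/d(x,y); in particular the limit defining the Lin–Lu–Yau curvature κ_LLY(x,y) = lim_{α→1⁻} h(α) exists and satisfies κ_LLY(x,y) ≤ 2/d(x,y). -/

import Mathlib

open Finset

/-- A probability measure on a finite set, given as a density. -/
def IsProbMeasure {V : Type*} [Fintype V] (m : V → ℝ) : Prop :=
  (∀ x, 0 ≤ m x) ∧ ∑ x, m x = 1

/-- A coupling between two probability measures on a finite set. -/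
def IsCoupling {V : Type*} [Fintype V] (A : V × V → ℝ) (m₁ m₂ : V → ℝ) : Prop :=
  (∀ p, 0 ≤ A p) ∧ (∀ x, ∑ y, A (x, y) = m₁ x) ∧ (∀ y, ∑ x, A (x, y) = m₂ y)

/-- The Wasserstein-1 (transportation) distance between two probability measures on a
finite set, with respect to a cost `d`. -/
noncomputable def W {V : Type*} [Fintype V] (d : V → V → ℝ) (m₁ m₂ : V → ℝ) : ℝ :=
  sInf {c | ∃ A, IsCoupling A m₁ m₂ ∧ c = ∑ p : V × V, A p * d p.1 p.2}

lemma W_symm {V : Type*} [Fintype V] (d : V → V → ℝ) (hd : ∀ x y, d x y = d y x)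
    (m₁ m₂ : V → ℝ) : W d m₁ m₂ = W d m₂ m₁ := by
  have key : ∀ m₁ m₂ : V → ℝ,
      {c | ∃ A, IsCoupling A m₁ m₂ ∧ c = ∑ p : V × V, A p * d p.1 p.2} ⊆
      {c | ∃ A, IsCoupling A m₂ m₁ ∧ c = ∑ p : V × V, A p * d p.1 p.2} := by
    rintro m₁ m₂ c ⟨A, ⟨h0, h1, h2⟩, rfl⟩
    refine ⟨fun p => A (p.2, p.1), ⟨fun p => h0 _, fun x => h2 x, fun y => h1 y⟩, ?_⟩
    refine Fintype.sum_equiv (Equiv.prodComm V V) _ _ ?_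
    intro p
    simp [Equiv.prodComm, hd p.1 p.2]
  unfold W
  congr 1
  exact Set.Subset.antisymm (key m₁ m₂) (key m₂ m₁)

/-- The `α`-lazy random walk measure at a vertex `x` of a graph. -/
noncomputable def lazyWalk {V : Type*} [Fintype V] [DecidableEq V] (G : SimpleGraph V)
    [DecidableRel G.Adj] (α : ℝ) (x : V) : V → ℝ :=
  fun v => if v = x then α else if G.Adj x v then (1 - α) / (G.degree x) else 0

/-- The `α`-Ricci curvature `κ_α(x,y) = 1 - W(m_x^α, m_y^α)/d(x,y)`. -/
noncomputable def kappaAlpha {V : Type*} [Fintype V] [DecidableEq V] (G : SimpleGraph V)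
    [DecidableRel G.Adj] (α : ℝ) (x y : V) : ℝ :=
  1 - W (fun a b => (G.dist a b : ℝ)) (lazyWalk G α x) (lazyWalk G α y) / (G.dist x y)

lemma kappaAlpha_symm {V : Type*} [Fintype V] [DecidableEq V] (G : SimpleGraph V)
    [DecidableRel G.Adj] (α : ℝ) (x y : V) :
    kappaAlpha G α x y = kappaAlpha G α y x := by
  unfold kappaAlpha
  rw [W_symm _ (fun a b => by rw [SimpleGraph.dist_comm]),
    SimpleGraph.dist_comm]

/-- The Lin–Lu–Yau Ricci curvature `κ_LLY(x,y) = lim_{α → 1⁻} κ_α(x,y)/(1-α)`. -/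
noncomputable def kappaLLY {V : Type*} [Fintype V] [DecidableEq V] (G : SimpleGraph V)
    [DecidableRel G.Adj] (x y : V) : ℝ :=
  Filter.limUnder (nhdsWithin 1 (Set.Ico (0:ℝ) 1)) (fun α => kappaAlpha G α x y / (1 - α))

lemma kappaLLY_symm {V : Type*} [Fintype V] [DecidableEq V] (G : SimpleGraph V)
    [DecidableRel G.Adj] (x y : V) : kappaLLY G x y = kappaLLY G y x := by
  unfold kappaLLY
  congr 1
  funext α
  rw [kappaAlpha_symm]

/-- Integral `α`-Ricci curvature `I^α_{κ₀}`: total amount of `α`-Ricci curvature below the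
threshold `(1-α)κ₀`, summed over the edges of `G`. -/
noncomputable def IAlpha {V : Type*} [Fintype V] [DecidableEq V] (G : SimpleGraph V)
    [DecidableRel G.Adj] (α κ₀ : ℝ) : ℝ :=
  ∑ e ∈ G.edgeFinset,
    Sym2.lift ⟨fun x y => max 0 ((1 - α) * κ₀ - kappaAlpha G α x y),
      fun x y => by simp only []; rw [kappaAlpha_symm]⟩ e

/-- Integral Lin–Lu–Yau Ricci curvature `I_{κ₀}`: total amount of Lin–Lu–Yau Ricci curvature
below the threshold `κ₀`, summed over the edges of `G`. -/
noncomputable def ILLY {V : Type*} [Fintype V] [DecidableEq V] (G : SimpleGraph V)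
    [DecidableRel G.Adj] (κ₀ : ℝ) : ℝ :=
  ∑ e ∈ G.edgeFinset,
    Sym2.lift ⟨fun x y => max 0 (κ₀ - kappaLLY G x y),
      fun x y => by simp only []; rw [kappaLLY_symm]⟩ e

/-- The diameter of a finite graph. -/
noncomputable def gDiam {V : Type*} [Fintype V] (G : SimpleGraph V) : ℕ :=
  Finset.univ.sup fun p : V × V => G.dist p.1 p.2

section Aux
variable {V : Type*} [Fintype V] [DecidableEq V] (G : SimpleGraph V) [DecidableRel G.Adj]

lemma lazyWalk_eq (α : ℝ) (x v : V) :
    lazyWalk G α x v = (if v = x then α else 0)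
      + (if G.Adj x v then (1 - α) / (G.degree x) else 0) := by
  unfold lazyWalk
  by_cases h : v = x
  · subst h; simp
  · simp [h]

lemma lazyWalk_nonneg {α : ℝ} (h0 : 0 ≤ α) (h1 : α ≤ 1) (x v : V) :
    0 ≤ lazyWalk G α x v := by
  unfold lazyWalk
  split_ifs
  · exact h0
  · apply div_nonneg (by linarith)
    exact Nat.cast_nonneg _
  · exact le_refl 0

lemma lazyWalk_sum {α : ℝ} (x : V) (hdeg : 0 < G.degree x) :
    ∑ v, lazyWalk G α x v = 1 := by
  simp only [lazyWalk_eq, Finset.sum_add_distrib]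
  rw [Finset.sum_ite_eq' univ x (fun _ => α)]
  rw [← Finset.sum_filter, ← SimpleGraph.neighborFinset_eq_filter, Finset.sum_const,
    SimpleGraph.card_neighborFinset_eq_degree]
  simp only [mem_univ, if_true, nsmul_eq_mul]
  field_simp
  ring

lemma lazyWalk_sum_dist {α : ℝ} (x : V) (hdeg : 0 < G.degree x) :
    ∑ v, lazyWalk G α x v * (G.dist x v : ℝ) = 1 - α := by
  have : ∀ v, lazyWalk G α x v * (G.dist x v : ℝ)
      = if G.Adj x v then (1 - α) / (G.degree x) else 0 := by
    intro v
    by_cases h : v = x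
    · subst h; simp [lazyWalk, SimpleGraph.dist_self]
    · by_cases ha : G.Adj x v
      · have : G.dist x v = 1 := SimpleGraph.dist_eq_one_iff_adj.2 ha
        simp [lazyWalk, h, ha, this]
      · simp [lazyWalk, h, ha]
  rw [Finset.sum_congr rfl fun v _ => this v]
  rw [← Finset.sum_filter, ← SimpleGraph.neighborFinset_eq_filter, Finset.sum_const,
    SimpleGraph.card_neighborFinset_eq_degree, nsmul_eq_mul]
  field_simp

end Aux

section Aux2
variable {V : Type*} [Fintype V]

lemma coupling_nonempty {m₁ m₂ : V → ℝ} (h₁ : IsProbMeasure m₁) (h₂ : IsProbMeasure m₂) :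
    IsCoupling (fun p : V × V => m₁ p.1 * m₂ p.2) m₁ m₂ := by
  refine ⟨fun p => mul_nonneg (h₁.1 _) (h₂.1 _), fun x => ?_, fun y => ?_⟩
  · simp only []
    rw [← Finset.mul_sum, h₂.2, mul_one]
  · simp only []
    rw [← Finset.sum_mul, h₁.2, one_mul]

lemma couplingSet_nonempty {d : V → V → ℝ} {m₁ m₂ : V → ℝ} (h₁ : IsProbMeasure m₁)
    (h₂ : IsProbMeasure m₂) :
    {c | ∃ A, IsCoupling A m₁ m₂ ∧ c = ∑ p : V × V, A p * d p.1 p.2}.Nonempty :=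
  ⟨_, _, coupling_nonempty h₁ h₂, rfl⟩

lemma couplingSet_bddBelow {d : V → V → ℝ} (hd : ∀ a b, 0 ≤ d a b) (m₁ m₂ : V → ℝ) :
    BddBelow {c | ∃ A, IsCoupling A m₁ m₂ ∧ c = ∑ p : V × V, A p * d p.1 p.2} := by
  refine ⟨0, fun c hc => ?_⟩
  obtain ⟨A, hA, rfl⟩ := hc
  exact Finset.sum_nonneg fun p _ => mul_nonneg (hA.1 p) (hd _ _)

end Aux2

section Aux3
variable {V : Type*} [Fintype V] [DecidableEq V] (G : SimpleGraph V) [DecidableRel G.Adj]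

lemma lazyWalk_prob {α : ℝ} (h0 : 0 ≤ α) (h1 : α ≤ 1) (x : V) (hdeg : 0 < G.degree x) :
    IsProbMeasure (lazyWalk G α x) :=
  ⟨lazyWalk_nonneg G h0 h1 x, lazyWalk_sum G x hdeg⟩

lemma W_lower (hG : G.Connected) {α : ℝ} (h0 : 0 ≤ α) (h1 : α ≤ 1) (x y : V)
    (hx : 0 < G.degree x) (hy : 0 < G.degree y) :
    (G.dist x y : ℝ) - 2 * (1 - α) ≤
      W (fun a b => (G.dist a b : ℝ)) (lazyWalk G α x) (lazyWalk G α y) := by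
  unfold W
  refine le_csInf ⟨_, ⟨_, coupling_nonempty (lazyWalk_prob G h0 h1 x hx)
    (lazyWalk_prob G h0 h1 y hy), rfl⟩⟩ ?_
  rintro c ⟨A, ⟨hA0, hA1, hA2⟩, rfl⟩
  have hsum : ∑ p : V × V, A p = 1 := by
    rw [Fintype.sum_prod_type]
    simp only [hA1]
    exact lazyWalk_sum G x hx
  have hs1 : ∑ p : V × V, A p * (G.dist x p.1 : ℝ) = 1 - α := by
    rw [Fintype.sum_prod_type]
    have : ∀ u : V, ∑ v, A (u, v) * (G.dist x u : ℝ) = lazyWalk G α x u * (G.dist x u : ℝ) := by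
      intro u; rw [← Finset.sum_mul, hA1]
    rw [Finset.sum_congr rfl fun u _ => this u]
    exact lazyWalk_sum_dist G x hx
  have hs2 : ∑ p : V × V, A p * (G.dist p.2 y : ℝ) = 1 - α := by
    rw [Fintype.sum_prod_type_right]
    have : ∀ v : V, ∑ u, A (u, v) * (G.dist v y : ℝ) = lazyWalk G α y v * (G.dist y v : ℝ) := by
      intro v; rw [← Finset.sum_mul, hA2, SimpleGraph.dist_comm]
    rw [Finset.sum_congr rfl fun v _ => this v]
    exact lazyWalk_sum_dist G y hy
  have key : ∀ p : V × V,
      A p * ((G.dist x y : ℝ) - (G.dist x p.1 : ℝ) - (G.dist p.2 y : ℝ))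
        ≤ A p * (G.dist p.1 p.2 : ℝ) := by
    intro p
    apply mul_le_mul_of_nonneg_left _ (hA0 p)
    have h₁ : G.dist x y ≤ G.dist x p.1 + G.dist p.1 y := hG.dist_triangle
    have h₂ : G.dist p.1 y ≤ G.dist p.1 p.2 + G.dist p.2 y := hG.dist_triangle
    have := le_trans h₁ (Nat.add_le_add_left h₂ _)
    have h3 : (G.dist x y : ℝ) ≤ (G.dist x p.1 : ℝ)
        + ((G.dist p.1 p.2 : ℝ) + (G.dist p.2 y : ℝ)) := by exact_mod_cast this
    linarith
  have expand : ∑ p : V × V,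
      A p * ((G.dist x y : ℝ) - (G.dist x p.1 : ℝ) - (G.dist p.2 y : ℝ))
      = (∑ p : V × V, A p) * (G.dist x y : ℝ)
        - ∑ p : V × V, A p * (G.dist x p.1 : ℝ)
        - ∑ p : V × V, A p * (G.dist p.2 y : ℝ) := by
    simp [mul_sub, Finset.sum_sub_distrib, Finset.sum_mul]
  have := Finset.sum_le_sum (fun p (_ : p ∈ univ) => key p)
  rw [expand, hsum, hs1, hs2, one_mul] at this
  linarith

end Aux3

section Aux4
variable {V : Type*} [Fintype V] [DecidableEq V] (G : SimpleGraph V) [DecidableRel G.Adj]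

lemma lazyWalk_convex {α β : ℝ} (hα : α < 1) (x v : V) :
    lazyWalk G β x v = (1 - β) / (1 - α) * lazyWalk G α x v
      + (1 - (1 - β) / (1 - α)) * (if v = x then 1 else 0) := by
  have h : (1 : ℝ) - α ≠ 0 := by linarith
  unfold lazyWalk
  by_cases hv : v = x
  · simp only [hv, if_pos rfl, mul_one, ↓reduceIte]
    field_simp
    ring
  · by_cases ha : G.Adj x v
    · simp only [hv, if_neg, ha, if_pos, if_false, mul_zero, add_zero]
      rw [← mul_div_assoc, div_mul_cancel₀ _ h]
    · simp [hv, ha]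

lemma W_mix {α β : ℝ} (h0 : 0 ≤ α) (hab : α ≤ β) (hβ : β < 1) (x y : V)
    (hx : 0 < G.degree x) (hy : 0 < G.degree y) :
    W (fun a b => (G.dist a b : ℝ)) (lazyWalk G β x) (lazyWalk G β y) ≤
      (1 - β) / (1 - α) * W (fun a b => (G.dist a b : ℝ)) (lazyWalk G α x) (lazyWalk G α y)
      + (1 - (1 - β) / (1 - α)) * (G.dist x y : ℝ) := by
  set c := (1 - β) / (1 - α) with hc
  have hα1 : α < 1 := lt_of_le_of_lt hab hβ
  have h1α : (0:ℝ) < 1 - α := by linarith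
  have h1β : (0:ℝ) < 1 - β := by linarith
  have hcpos : 0 < c := div_pos h1β h1α
  have hc1 : c ≤ 1 := by
    rw [hc, div_le_one h1α]; linarith
  -- reduce to: for every coupling A of the α-walks, sInf S_β ≤ c * cost(A) + (1-c) * d
  have key : ∀ a ∈ {c | ∃ A, IsCoupling A (lazyWalk G α x) (lazyWalk G α y) ∧
      c = ∑ p : V × V, A p * (G.dist p.1 p.2 : ℝ)},
      W (fun a b => (G.dist a b : ℝ)) (lazyWalk G β x) (lazyWalk G β y)
        ≤ c * a + (1 - c) * (G.dist x y : ℝ) := by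
    rintro a ⟨A, ⟨hA0, hA1, hA2⟩, rfl⟩
    set B : V × V → ℝ := fun p => c * A p + (1 - c) * (if p = (x, y) then 1 else 0) with hB
    have hBcoup : IsCoupling B (lazyWalk G β x) (lazyWalk G β y) := by
      refine ⟨fun p => ?_, fun u => ?_, fun v => ?_⟩
      · have : (0:ℝ) ≤ (if p = (x, y) then 1 else 0) := by positivity
        have := mul_nonneg (by linarith : (0:ℝ) ≤ 1 - c) this
        have := mul_nonneg hcpos.le (hA0 p)
        simp only [hB]
        linarith
      · simp only [hB]
        rw [Finset.sum_add_distrib, ← Finset.mul_sum, hA1, ← Finset.mul_sum]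
        have : ∑ v, (if (u, v) = (x, y) then (1:ℝ) else 0) = if u = x then 1 else 0 := by
          by_cases hu : u = x
          · subst hu
            simp [Prod.ext_iff]
          · simp [Prod.ext_iff, hu]
        rw [this, ← lazyWalk_convex G hα1]
      · simp only [hB]
        rw [Finset.sum_add_distrib, ← Finset.mul_sum, hA2, ← Finset.mul_sum]
        have : ∑ u, (if (u, v) = (x, y) then (1:ℝ) else 0) = if v = y then 1 else 0 := by
          by_cases hv : v = y
          · subst hv
            simp [Prod.ext_iff]
          · simp [Prod.ext_iff, hv]
        rw [this, ← lazyWalk_convex G hα1]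
    have hcost : ∑ p : V × V, B p * (G.dist p.1 p.2 : ℝ)
        = c * (∑ p : V × V, A p * (G.dist p.1 p.2 : ℝ)) + (1 - c) * (G.dist x y : ℝ) := by
      simp only [hB, add_mul, mul_assoc]
      rw [Finset.sum_add_distrib, ← Finset.mul_sum, ← Finset.mul_sum]
      congr 2
      have : ∀ p : V × V, (if p = (x, y) then (1:ℝ) else 0) * (G.dist p.1 p.2 : ℝ)
          = if p = (x, y) then (G.dist p.1 p.2 : ℝ) else 0 := by
        intro p; split_ifs <;> simp
      rw [Finset.sum_congr rfl fun p _ => this p,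
        Finset.sum_ite_eq' univ (x, y) (fun p : V × V => (G.dist p.1 p.2 : ℝ))]
      simp
    rw [← hcost]
    unfold W
    apply csInf_le (couplingSet_bddBelow (fun a b => Nat.cast_nonneg _) _ _)
    exact ⟨B, hBcoup, rfl⟩
  -- conclude
  have hne : {c | ∃ A, IsCoupling A (lazyWalk G α x) (lazyWalk G α y) ∧
      c = ∑ p : V × V, A p * (G.dist p.1 p.2 : ℝ)}.Nonempty :=
    ⟨_, ⟨_, coupling_nonempty (lazyWalk_prob G h0 hα1.le x hx)
      (lazyWalk_prob G h0 hα1.le y hy), rfl⟩⟩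
  set Wb := W (fun a b => (G.dist a b : ℝ)) (lazyWalk G β x) (lazyWalk G β y) with hWb
  have : (Wb - (1 - c) * (G.dist x y : ℝ)) / c ≤
      W (fun a b => (G.dist a b : ℝ)) (lazyWalk G α x) (lazyWalk G α y) := by
    unfold W
    apply le_csInf hne
    intro b hb
    rw [div_le_iff₀ hcpos]
    have := key b hb
    linarith [this]
  rw [div_le_iff₀ hcpos] at this
  linarith

end Aux4

section Aux5
variable {V : Type*} [Fintype V] [DecidableEq V] (G : SimpleGraph V) [DecidableRel G.Adj]

lemma degree_pos_of_connected (hG : G.Connected) [Nontrivial V] (v : V) :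
    0 < G.degree v := by
  obtain ⟨w, hw⟩ := exists_ne v
  obtain ⟨p⟩ := hG.preconnected v w
  have hnil : ¬ p.Nil := SimpleGraph.Walk.not_nil_of_ne (Ne.symm hw)
  exact (SimpleGraph.degree_pos_iff_exists_adj G v).2 ⟨_, SimpleGraph.Walk.adj_snd hnil⟩

lemma kappa_mono_step (hG : G.Connected) {x y : V} (hxy : x ≠ y)
    (hx : 0 < G.degree x) (hy : 0 < G.degree y) {α β : ℝ}
    (h0 : 0 ≤ α) (hab : α ≤ β) (hβ : β < 1) :
    kappaAlpha G α x y / (1 - α) ≤ kappaAlpha G β x y / (1 - β) := by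
  have hα1 : α < 1 := lt_of_le_of_lt hab hβ
  have h1α : (0:ℝ) < 1 - α := by linarith
  have h1β : (0:ℝ) < 1 - β := by linarith
  have hd : (0:ℝ) < (G.dist x y : ℝ) := by
    exact_mod_cast hG.pos_dist_of_ne hxy
  have hW := W_mix G h0 hab hβ x y hx hy
  set Wα := W (fun a b => (G.dist a b : ℝ)) (lazyWalk G α x) (lazyWalk G α y) with hWα
  set Wβ := W (fun a b => (G.dist a b : ℝ)) (lazyWalk G β x) (lazyWalk G β y) with hWβ
  unfold kappaAlpha
  rw [← hWα, ← hWβ, div_le_div_iff₀ h1α h1β]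
  have e1 : Wα / (G.dist x y : ℝ) * (G.dist x y : ℝ) = Wα := div_mul_cancel₀ _ hd.ne'
  have e2 : Wβ / (G.dist x y : ℝ) * (G.dist x y : ℝ) = Wβ := div_mul_cancel₀ _ hd.ne'
  have hc : (1 - β) / (1 - α) * (1 - α) = 1 - β := div_mul_cancel₀ _ h1α.ne'
  have hkey : Wβ * (1 - α) ≤ (1 - β) * Wα + (β - α) * (G.dist x y : ℝ) := by
    have := mul_le_mul_of_nonneg_right hW h1α.le
    rw [add_mul, mul_comm ((1 - β) / (1 - α)) Wα] at this
    have t1 : Wα * ((1 - β) / (1 - α)) * (1 - α) = Wα * (1 - β) := by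
      rw [mul_assoc, hc]
    have t2 : (1 - (1 - β) / (1 - α)) * (G.dist x y : ℝ) * (1 - α)
        = (β - α) * (G.dist x y : ℝ) := by
      field_simp
      ring
    rw [t1, t2] at this
    linarith
  have hgoal : (1 - Wα / (G.dist x y : ℝ)) * (1 - β) * (G.dist x y : ℝ)
      ≤ (1 - Wβ / (G.dist x y : ℝ)) * (1 - α) * (G.dist x y : ℝ) := by
    have expand1 : (1 - Wα / (G.dist x y : ℝ)) * (1 - β) * (G.dist x y : ℝ)
        = (1 - β) * (G.dist x y : ℝ) - (1 - β) * Wα := by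
      field_simp
    have expand2 : (1 - Wβ / (G.dist x y : ℝ)) * (1 - α) * (G.dist x y : ℝ)
        = (1 - α) * (G.dist x y : ℝ) - (1 - α) * Wβ := by
      field_simp
    rw [expand1, expand2]
    nlinarith [hkey, hd]
  exact le_of_mul_le_mul_right hgoal hd

lemma kappa_bound (hG : G.Connected) {x y : V} (hxy : x ≠ y)
    (hx : 0 < G.degree x) (hy : 0 < G.degree y) {α : ℝ} (h0 : 0 ≤ α) (hα : α < 1) :
    kappaAlpha G α x y / (1 - α) ≤ 2 / (G.dist x y : ℝ) := by
  have h1α : (0:ℝ) < 1 - α := by linarith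
  have hd : (0:ℝ) < (G.dist x y : ℝ) := by
    exact_mod_cast hG.pos_dist_of_ne hxy
  have hW := W_lower G hG h0 hα.le x y hx hy
  set Wα := W (fun a b => (G.dist a b : ℝ)) (lazyWalk G α x) (lazyWalk G α y) with hWα
  unfold kappaAlpha
  rw [← hWα, div_le_div_iff₀ h1α hd]
  have e1 : Wα / (G.dist x y : ℝ) * (G.dist x y : ℝ) = Wα := div_mul_cancel₀ _ hd.ne'
  nlinarith [hW, hd]

end Aux5


/-- `κ_α(x,y)/(1-α)` is increasing in `α` and bounded by `2/d(x,y)`; so the limit defining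
the Lin–Lu–Yau curvature exists and satisfies `κ_LLY(x,y) ≤ 2/d(x,y)`. -/
theorem stmt_7 {V : Type*} [Fintype V] [DecidableEq V] (G : SimpleGraph V)
    [DecidableRel G.Adj] (hG : G.Connected) (x y : V) (hxy : x ≠ y) :
    MonotoneOn (fun α => kappaAlpha G α x y / (1 - α)) (Set.Ico (0:ℝ) 1) ∧
    (∀ α ∈ Set.Ico (0:ℝ) 1, kappaAlpha G α x y / (1 - α) ≤ 2 / (G.dist x y)) ∧
    Filter.Tendsto (fun α => kappaAlpha G α x y / (1 - α))
      (nhdsWithin 1 (Set.Ico (0:ℝ) 1)) (nhds (kappaLLY G x y)) ∧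
    kappaLLY G x y ≤ 2 / (G.dist x y) := by
  haveI : Nontrivial V := ⟨⟨x, y, hxy⟩⟩
  have hx := degree_pos_of_connected G hG x
  have hy := degree_pos_of_connected G hG y
  set f : ℝ → ℝ := fun α => kappaAlpha G α x y / (1 - α) with hf
  have mono : MonotoneOn f (Set.Ico (0:ℝ) 1) := by
    intro a ha b hb hab
    exact kappa_mono_step G hG hxy hx hy ha.1 hab hb.2
  have bound : ∀ α ∈ Set.Ico (0:ℝ) 1, f α ≤ 2 / (G.dist x y : ℝ) := by
    intro α hα
    exact kappa_bound G hG hxy hx hy hα.1 hα.2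
  have hmono' : MonotoneOn f (Set.Ioo (0:ℝ) 1) := mono.mono Set.Ioo_subset_Ico_self
  have hbdd : BddAbove (f '' Set.Ioo (0:ℝ) 1) := by
    refine ⟨2 / (G.dist x y : ℝ), ?_⟩
    rintro _ ⟨a, ha, rfl⟩
    exact bound a (Set.Ioo_subset_Ico_self ha)
  have hne : (Set.Ioo (0:ℝ) 1).Nonempty := ⟨1/2, by norm_num⟩
  have ht : Filter.Tendsto f (nhdsWithin 1 (Set.Iio (1:ℝ)))
      (nhds (sSup (f '' Set.Ioo (0:ℝ) 1))) :=
    MonotoneOn.tendsto_nhdsWithin_Ioo_left hne hmono' hbdd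
  have heq : nhdsWithin (1:ℝ) (Set.Ico (0:ℝ) 1) = nhdsWithin 1 (Set.Iio (1:ℝ)) :=
    nhdsWithin_Ico_eq_nhdsLT (by norm_num)
  have ht2 : Filter.Tendsto f (nhdsWithin 1 (Set.Ico (0:ℝ) 1))
      (nhds (sSup (f '' Set.Ioo (0:ℝ) 1))) := by rw [heq]; exact ht
  haveI : (nhdsWithin (1:ℝ) (Set.Ico (0:ℝ) 1)).NeBot := by
    rw [heq]; infer_instance
  have hLLY : kappaLLY G x y = sSup (f '' Set.Ioo (0:ℝ) 1) := ht2.limUnder_eq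
  refine ⟨mono, bound, ?_, ?_⟩
  · rw [hLLY]; exact ht2
  · rw [hLLY]
    refine csSup_le (hne.image f) ?_
    rintro _ ⟨a, ha, rfl⟩
    exact bound a (Set.Ioo_subset_Ico_self ha)
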